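/- Let −1 < p ≤ 0 and β = 1/(8(p+1)(p+3)). For all x > 0, one has 1/(p+1) + 𝓘_p(x) + βx² < ((p+2)/(p+1) + βx²)·𝓘_{p+1}(x). -/

import Mathlib

open Real

noncomputable def besselJn (p x : ℝ) : ℝ :=
  ∑' n : ℕ, (-(1:ℝ)/4)^n * x^(2*n) / ((Real.Gamma (p+n+1) / Real.Gamma (p+1)) * n.factorial)

noncomputable def besselIn (p x : ℝ) : ℝ :=
  ∑' n : ℕ, ((1:ℝ)/4)^n * x^(2*n) / ((Real.Gamma (p+n+1) / Real.Gamma (p+1)) * n.factorial)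

noncomputable def besselJ (p x : ℝ) : ℝ :=
  ∑' n : ℕ, (-1:ℝ)^n * (x/2)^(p+2*n) / (n.factorial * Real.Gamma (p+n+1))

namespace ModFrameAux

noncomputable def G (p : ℝ) (n : ℕ) : ℝ := Real.Gamma (p + n + 1) / Real.Gamma (p + 1)

noncomputable def iterm (p x : ℝ) (n : ℕ) : ℝ :=
  ((1:ℝ)/4)^n * x^(2*n) / (G p n * n.factorial)

lemma besselIn_eq (p x : ℝ) : besselIn p x = ∑' n, iterm p x n := rfl

variable {p : ℝ}

lemma G_pos (hp : -1 < p) (n : ℕ) : 0 < G p n := by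
  have h0 : (0:ℝ) ≤ n := n.cast_nonneg
  exact div_pos (Real.Gamma_pos_of_pos (by linarith)) (Real.Gamma_pos_of_pos (by linarith))

lemma G_zero (hp : -1 < p) : G p 0 = 1 := by
  have : (0:ℝ) < Real.Gamma (p+1) := Real.Gamma_pos_of_pos (by linarith)
  simp only [G, Nat.cast_zero, add_zero]
  exact div_self this.ne'

lemma G_succ (hp : -1 < p) (n : ℕ) : G p (n+1) = (p + n + 1) * G p n := by
  have h0 : (0:ℝ) ≤ n := n.cast_nonneg
  have hne : p + n + 1 ≠ 0 := by linarith
  unfold G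
  rw [show p + (↑(n+1):ℝ) + 1 = (p + n + 1) + 1 by push_cast; ring,
    Real.Gamma_add_one hne, mul_div_assoc]

lemma G_shift (hp : -1 < p) (n : ℕ) : G (p+1) n = G p (n+1) / (p+1) := by
  have hne : p + 1 ≠ 0 := by linarith
  unfold G
  rw [show p + 1 + 1 = (p+1) + 1 by ring, Real.Gamma_add_one hne,
    show p + 1 + (n:ℝ) + 1 = p + ↑(n+1) + 1 by push_cast; ring, div_div, mul_comm]

lemma iterm_eq' (p x : ℝ) (n : ℕ) :
    iterm p x n = (x^2/4)^n / (G p n * n.factorial) := by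
  unfold iterm
  rw [div_pow, one_pow, div_pow, ← pow_mul]
  ring

lemma iterm_zero (hp : -1 < p) (x : ℝ) : iterm p x 0 = 1 := by
  rw [iterm_eq', G_zero hp]
  simp

lemma iterm_one (hp : -1 < p) (x : ℝ) : iterm p x 1 = x^2/(4*(p+1)) := by
  have h1 : G p 1 = p + 1 := by
    rw [show (1:ℕ) = 0 + 1 from rfl, G_succ hp, G_zero hp]
    simp
  have hne : p + 1 ≠ 0 := by linarith
  rw [iterm_eq', h1, pow_one]
  simp only [Nat.factorial_one, Nat.cast_one, mul_one]
  rw [div_div]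

lemma G_ge (hp : -1 < p) (n : ℕ) : min (p+1) 1 ≤ G p n := by
  induction n with
  | zero => rw [G_zero hp]; exact min_le_right _ _
  | succ n ih =>
    rw [G_succ hp]
    rcases Nat.eq_zero_or_pos n with h | h
    · subst h
      rw [G_zero hp]
      simp only [Nat.cast_zero, add_zero, mul_one]
      exact min_le_left (p+1) 1
    · have h1 : (1:ℝ) ≤ n := by exact_mod_cast h
      have hg := G_pos hp n
      nlinarith [mul_pos (show (0:ℝ) < p + n by linarith) hg]

lemma iterm_summable (hp : -1 < p) (x : ℝ) : Summable (iterm p x) := by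
  have hμ0 : 0 < min (p+1) 1 := lt_min (by linarith) one_pos
  apply Summable.of_nonneg_of_le
    (f := fun n => (x^2/4)^n / (n.factorial : ℝ) / min (p+1) 1)
  · intro n
    rw [iterm_eq']
    have hg := (G_pos hp n).le
    have hf : (0:ℝ) ≤ n.factorial := Nat.cast_nonneg _
    positivity
  · intro n
    rw [iterm_eq', div_div]
    have hg := G_pos hp n
    have hge := G_ge hp n
    have hf : (0:ℝ) < n.factorial := by exact_mod_cast n.factorial_pos
    have hnum : (0:ℝ) ≤ (x^2/4)^n := by positivity
    exact div_le_div_of_nonneg_left hnum (mul_pos hf hμ0) (by nlinarith)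
  · exact (Real.summable_pow_div_factorial (x^2/4)).div_const _

/-- The `n`-th term of the left-hand series. -/
noncomputable def Aseq (p x : ℝ) (n : ℕ) : ℝ :=
  iterm p x n + ((if n = 0 then 1/(p+1) else 0) +
    (if n = 1 then (1/(8*(p+1)*(p+3))) * x^2 else 0))

/-- The `n`-th term of the right-hand series. -/
noncomputable def Bseq (p x : ℝ) (n : ℕ) : ℝ :=
  (p+2)/(p+1) * iterm (p+1) x n +
    (if n = 0 then 0 else (1/(8*(p+1)*(p+3))) * x^2 * iterm (p+1) x (n-1))

set_option maxHeartbeats 1600000 in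
lemma key_id (hp : -1 < p) (x : ℝ) (m : ℕ) :
    (p+2)/(p+1) * iterm (p+1) x (m+2)
      + (1/(8*(p+1)*(p+3))) * x^2 * iterm (p+1) x (m+1)
      - iterm p x (m+2)
    = ((m:ℝ) * ((m:ℝ) - 1 - p)) *
        ((x^2/4)^(m+1) * x^2 /
          (G p (m+2) * ((m+1).factorial : ℝ) * (8*(p+3)*(p+(m:ℝ)+3)*((m:ℝ)+2)))) := by
  have hp' : -1 < p + 1 := by linarith
  have hG3 : G (p+1) (m+2) = (p + (m:ℝ) + 3) * G p (m+2) / (p+1) := by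
    rw [G_shift hp (m+2), G_succ hp (m+2)]
    push_cast
    ring
  have hG2 : G (p+1) (m+1) = G p (m+2) / (p+1) := G_shift hp (m+1)
  have hfac : (((m+2).factorial : ℕ) : ℝ) = ((m:ℝ)+2) * ((m+1).factorial : ℝ) := by
    rw [show m+2 = (m+1)+1 from rfl, Nat.factorial_succ]
    push_cast
    ring
  have hpow : (x^2/4)^(m+2) = (x^2/4)^(m+1) * (x^2/4) := pow_succ _ _
  have ha : G p (m+2) ≠ 0 := (G_pos hp _).ne'
  have hF : (((m+1).factorial : ℕ) : ℝ) ≠ 0 := by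
    exact_mod_cast (m+1).factorial_ne_zero
  have h1 : p + 1 ≠ 0 := by linarith
  have h3 : p + 3 ≠ 0 := by linarith
  have hm : (0:ℝ) ≤ m := Nat.cast_nonneg m
  have hm3 : p + (m:ℝ) + 3 ≠ 0 := by linarith
  have hm2 : (m:ℝ) + 2 ≠ 0 := by linarith
  rw [iterm_eq', iterm_eq', iterm_eq', hG3, hG2, hfac, hpow]
  field_simp
  ring

lemma key_pos_factor (hp : -1 < p) {x : ℝ} (hx : 0 < x) (m : ℕ) :
    0 < (x^2/4)^(m+1) * x^2 /
        (G p (m+2) * ((m+1).factorial : ℝ) * (8*(p+3)*(p+(m:ℝ)+3)*((m:ℝ)+2))) := by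
  have hg := G_pos hp (m+2)
  have hf : (0:ℝ) < ((m+1).factorial : ℕ) := by exact_mod_cast (m+1).factorial_pos
  have hm : (0:ℝ) ≤ m := Nat.cast_nonneg m
  have hx2 : (0:ℝ) < x^2 := by positivity
  have h8 : (0:ℝ) < 8*(p+3)*(p+(m:ℝ)+3)*((m:ℝ)+2) :=
    mul_pos (mul_pos (mul_pos (by norm_num) (by linarith)) (by linarith)) (by linarith)
  exact div_pos (mul_pos (pow_pos (by positivity) _) hx2) (mul_pos (mul_pos hg hf) h8)

theorem Aseq_le_Bseq (hp1 : -1 < p) (hp2 : p ≤ 0) {x : ℝ} (hx : 0 < x) (n : ℕ) :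
    Aseq p x n ≤ Bseq p x n := by
  have hp' : -1 < p + 1 := by linarith
  have h1 : p + 1 ≠ 0 := by linarith
  have h2 : p + 2 ≠ 0 := by linarith
  match n with
  | 0 =>
    simp only [Aseq, Bseq, iterm_zero hp1 x, iterm_zero hp' x]
    norm_num
    have he : (p+2)/(p+1) = 1 + 1/(p+1) := by
      field_simp
      ring
    rw [he, one_div]
  | 1 =>
    simp only [Aseq, Bseq, iterm_one hp1 x, iterm_one hp' x, iterm_zero hp' x]
    norm_num
    have hd1 : (p+1)*(4*(p+1+1)) ≠ 0 := by
      have : (0:ℝ) < 4*(p+1+1) := by linarith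
      exact mul_ne_zero h1 this.ne'
    have hd2 : 4*(p+1) ≠ 0 := by
      have : (0:ℝ) < 4*(p+1) := by linarith
      exact this.ne'
    have he : (p+2)/(p+1) * (x^2/(4*(p+1+1))) = x^2/(4*(p+1)) := by
      rw [div_mul_div_comm, div_eq_div_iff hd1 hd2]
      ring
    rw [he]
  | (m+2) =>
    simp only [Aseq, Bseq, if_neg (by omega : m+2 ≠ 0), if_neg (by omega : m+2 ≠ 1),
      add_zero]
    rw [← sub_nonneg]
    show 0 ≤ (p+2)/(p+1) * iterm (p+1) x (m+2)
      + (1/(8*(p+1)*(p+3))) * x^2 * iterm (p+1) x (m+1)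
      - iterm p x (m+2)
    rw [key_id hp1 x m]
    apply mul_nonneg _ (key_pos_factor hp1 hx m).le
    rcases Nat.eq_zero_or_pos m with h | h
    · subst h; simp
    · have hm1 : (1:ℝ) ≤ m := by exact_mod_cast h
      nlinarith

theorem Aseq_lt_Bseq4 (hp1 : -1 < p) (hp2 : p ≤ 0) {x : ℝ} (hx : 0 < x) :
    Aseq p x 4 < Bseq p x 4 := by
  simp only [Aseq, Bseq, if_neg (by norm_num : (4:ℕ) ≠ 0), if_neg (by norm_num : (4:ℕ) ≠ 1),
    add_zero]
  rw [← sub_pos]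
  show 0 < (p+2)/(p+1) * iterm (p+1) x (2+2)
    + (1/(8*(p+1)*(p+3))) * x^2 * iterm (p+1) x (2+1)
    - iterm p x (2+2)
  rw [key_id hp1 x 2]
  apply mul_pos _ (key_pos_factor hp1 hx 2)
  norm_num
  nlinarith

theorem Aseq_summable (hp1 : -1 < p) (x : ℝ) : Summable (Aseq p x) := by
  apply (iterm_summable hp1 x).add
  apply Summable.add
  · exact summable_of_ne_finset_zero (s := {0}) (fun b hb => if_neg (by simpa using hb))
  · exact summable_of_ne_finset_zero (s := {1}) (fun b hb => if_neg (by simpa using hb))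

theorem Bseq_summable (hp1 : -1 < p) (x : ℝ) : Summable (Bseq p x) := by
  have hp' : -1 < p + 1 := by linarith
  apply Summable.add
  · exact (iterm_summable hp' x).mul_left _
  · apply (summable_nat_add_iff 1).mp
    simpa using ((iterm_summable hp' x).mul_left ((1/(8*(p+1)*(p+3))) * x^2))

theorem Aseq_tsum (hp1 : -1 < p) (x : ℝ) :
    ∑' n, Aseq p x n = 1/(p+1) + besselIn p x + (1/(8*(p+1)*(p+3))) * x^2 := by
  unfold Aseq
  rw [Summable.tsum_add (iterm_summable hp1 x) (by
      apply Summable.add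
      · exact summable_of_ne_finset_zero (s := {0}) (fun b hb => if_neg (by simpa using hb))
      · exact summable_of_ne_finset_zero (s := {1}) (fun b hb => if_neg (by simpa using hb))),
    Summable.tsum_add (summable_of_ne_finset_zero (s := {0}) (fun b hb => if_neg (by simpa using hb)))
      (summable_of_ne_finset_zero (s := {1}) (fun b hb => if_neg (by simpa using hb))),
    tsum_ite_eq (0:ℕ) (fun _ => 1/(p+1)), tsum_ite_eq (1:ℕ) (fun _ => (1/(8*(p+1)*(p+3))) * x^2),
    besselIn_eq]
  ring

theorem Bseq_tsum (hp1 : -1 < p) (x : ℝ) :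
    ∑' n, Bseq p x n =
      ((p+2)/(p+1) + (1/(8*(p+1)*(p+3))) * x^2) * besselIn (p+1) x := by
  have hp' : -1 < p + 1 := by linarith
  have hs2 : Summable (fun n : ℕ =>
      if n = 0 then 0 else (1/(8*(p+1)*(p+3))) * x^2 * iterm (p+1) x (n-1)) := by
    apply (summable_nat_add_iff 1).mp
    simpa using ((iterm_summable hp' x).mul_left ((1/(8*(p+1)*(p+3))) * x^2))
  unfold Bseq
  rw [Summable.tsum_add ((iterm_summable hp' x).mul_left _) hs2, tsum_mul_left,
    Summable.tsum_eq_zero_add hs2]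
  simp only [Nat.add_sub_cancel, Nat.succ_ne_zero, ite_false, ite_true, reduceIte, zero_add]
  rw [tsum_mul_left, besselIn_eq]
  ring

end ModFrameAux

open ModFrameAux in
theorem modified_frame_upper (p : ℝ) (hp1 : -1 < p) (hp2 : p ≤ 0) (x : ℝ) (hx : 0 < x) :
    1/(p+1) + besselIn p x + (1/(8*(p+1)*(p+3))) * x^2 <
      ((p+2)/(p+1) + (1/(8*(p+1)*(p+3))) * x^2) * besselIn (p+1) x := by
  calc 1/(p+1) + besselIn p x + (1/(8*(p+1)*(p+3))) * x^2
      = ∑' n, Aseq p x n := (Aseq_tsum hp1 x).symm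
    _ < ∑' n, Bseq p x n :=
        Summable.tsum_lt_tsum (fun n => Aseq_le_Bseq hp1 hp2 hx n) (Aseq_lt_Bseq4 hp1 hp2 hx)
          (Aseq_summable hp1 x) (Bseq_summable hp1 x)
    _ = _ := Bseq_tsum hp1 x
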